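/- Let q be a real number with q > 0 and q ≠ 1, and for natural numbers n, k with 2k ≤ n define c_{n,k}(q) = (-1)^k q^{k(k-1)}·{n}_q!/({n-2k}_q!·{2k}_q!!). Then c_{n,k}(1/q) = q^{k(k+3-2n)}·c_{n,k}(q), where c_{n,k}(1/q) is the same expression with q replaced by 1/q and q^{k(k+3-2n)} denotes the integer power of q. -/
import Mathlib

open Finset


/-- The q-number `{n}_q = 1 + q + ⋯ + q^{n-1}`. -/
noncomputable def qNum (q : ℝ) (n : ℕ) : ℝ := ∑ k ∈ Finset.range n, q ^ k

/-- The q-factorial `{n}_q! = Π_{k=1}^n {k}_q`. -/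
noncomputable def qFact (q : ℝ) (n : ℕ) : ℝ := ∏ k ∈ Finset.range n, qNum q (k + 1)

/-- The even q-double factorial `{2k}_q!! = Π_{l=1}^k {2l}_q`. -/
noncomputable def qDoubleFact (q : ℝ) (k : ℕ) : ℝ := ∏ l ∈ Finset.range k, qNum q (2 * (l + 1))

/-- The coefficient `c_{n,k}(q) = (-1)^k q^{k(k-1)} {n}_q!/({n-2k}_q!·{2k}_q!!)`. -/
noncomputable def qHermiteCoeff (q : ℝ) (n k : ℕ) : ℝ :=
  (-1 : ℝ) ^ k * q ^ (k * (k - 1)) * qFact q n / (qFact q (n - 2 * k) * qDoubleFact q k)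

lemma qNum_pos {q : ℝ} (hq : 0 < q) {n : ℕ} (hn : 0 < n) : 0 < qNum q n :=
  Finset.sum_pos (fun k _ => pow_pos hq k) (nonempty_range_iff.mpr hn.ne')

lemma qFact_pos {q : ℝ} (hq : 0 < q) (n : ℕ) : 0 < qFact q n :=
  Finset.prod_pos fun k _ => qNum_pos hq k.succ_pos

lemma qDoubleFact_pos {q : ℝ} (hq : 0 < q) (k : ℕ) : 0 < qDoubleFact q k :=
  Finset.prod_pos fun l _ => qNum_pos hq (by positivity)

lemma qNum_inv {q : ℝ} (hq : q ≠ 0) (n : ℕ) :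
    qNum q⁻¹ n = q ^ (1 - (n : ℤ)) * qNum q n := by
  cases n with
  | zero => simp [qNum]
  | succ m =>
    unfold qNum
    rw [Finset.mul_sum, ← Finset.sum_range_reflect (fun j => q⁻¹ ^ j) (m + 1)]
    refine Finset.sum_congr rfl fun j hj => ?_
    have hjm : j ≤ m := Nat.lt_succ_iff.mp (mem_range.mp hj)
    rw [inv_pow, ← zpow_natCast q (m + 1 - 1 - j), ← zpow_neg, ← zpow_natCast q j,
      ← zpow_add₀ hq]
    congr 1
    have : ((m + 1 - 1 - j : ℕ) : ℤ) = (m : ℤ) - j := by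
      simp; omega
    rw [this]; push_cast; ring

lemma qFact_inv {q : ℝ} (hq : q ≠ 0) (n : ℕ) :
    qFact q⁻¹ n = q ^ (-(∑ i ∈ Finset.range n, (i : ℤ))) * qFact q n := by
  induction n with
  | zero => simp [qFact]
  | succ m ih =>
    unfold qFact
    rw [Finset.prod_range_succ, Finset.prod_range_succ, ← qFact, ← qFact, ih,
      qNum_inv hq, mul_mul_mul_comm, ← zpow_add₀ hq, Finset.sum_range_succ]
    congr 2
    push_cast
    ring

lemma qDoubleFact_inv {q : ℝ} (hq : q ≠ 0) (k : ℕ) :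
    qDoubleFact q⁻¹ k = q ^ (-((k : ℤ) ^ 2)) * qDoubleFact q k := by
  induction k with
  | zero => simp [qDoubleFact]
  | succ m ih =>
    unfold qDoubleFact
    rw [Finset.prod_range_succ, Finset.prod_range_succ, ← qDoubleFact, ← qDoubleFact, ih,
      qNum_inv hq, mul_mul_mul_comm, ← zpow_add₀ hq]
    congr 2
    push_cast
    ring

lemma twoSum (N : ℕ) : 2 * (∑ i ∈ Finset.range N, (i : ℤ)) = N * (N - 1) := by
  induction N with
  | zero => simp
  | succ m ih => rw [Finset.sum_range_succ]; push_cast; push_cast at ih; ring_nf; ring_nf at ih; linarith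

theorem qHermiteCoeff_inv' (q : ℝ) (hq0 : 0 < q) (hq1 : q ≠ 1) (n k : ℕ) (hk : 2 * k ≤ n) :
    (-1 : ℝ) ^ k * (1/q) ^ (k * (k - 1)) * qFact (1/q) n / (qFact (1/q) (n - 2 * k) * qDoubleFact (1/q) k) =
      q ^ ((k : ℤ) * ((k : ℤ) + 3 - 2 * (n : ℤ))) *
        ((-1 : ℝ) ^ k * q ^ (k * (k - 1)) * qFact q n / (qFact q (n - 2 * k) * qDoubleFact q k)) := by
  have hq : q ≠ 0 := hq0.ne'
  set m := n - 2 * k with hmdef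
  have hm : ((m : ℤ)) = (n : ℤ) - 2 * k := by omega
  have hA : ((k * (k - 1) : ℕ) : ℤ) = (k : ℤ) * k - k := by
    cases k with
    | zero => simp
    | succ j => push_cast; ring
  have hFn := qFact_pos hq0 n
  have hFm := qFact_pos hq0 m
  have hDk := qDoubleFact_pos hq0 k
  rw [one_div, qFact_inv hq, qFact_inv hq, qDoubleFact_inv hq, inv_pow,
    ← zpow_natCast q (k * (k - 1)), ← zpow_neg]
  set A : ℤ := ((k * (k - 1) : ℕ) : ℤ) with hAdef
  set Sn : ℤ := ∑ i ∈ Finset.range n, (i : ℤ) with hSn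
  set Sm : ℤ := ∑ i ∈ Finset.range m, (i : ℤ) with hSm
  set E : ℤ := (k : ℤ) * ((k : ℤ) + 3 - 2 * (n : ℤ)) with hE
  have key : q ^ (-A) * q ^ (-Sn) = q ^ E * q ^ A * q ^ (-Sm) * q ^ (-(k : ℤ) ^ 2) := by
    rw [← zpow_add₀ hq, ← zpow_add₀ hq, ← zpow_add₀ hq, ← zpow_add₀ hq]
    congr 1
    have h1 := twoSum n
    have h2 := twoSum m
    rw [hm] at h2
    rw [← hSn] at h1
    rw [← hSm] at h2
    simp only [hAdef, hA, hE]
    linarith [h1, h2]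
  rw [← mul_div_assoc, div_eq_div_iff (by positivity) (by positivity)]
  linear_combination ((-1 : ℝ) ^ k * qFact q n * qFact q m * qDoubleFact q k) * key

/-- `c_{n,k}(q^{-1}) = q^{k(k+3-2n)} c_{n,k}(q)`. -/
theorem qHermiteCoeff_inv (q : ℝ) (hq0 : 0 < q) (hq1 : q ≠ 1) (n k : ℕ) (hk : 2 * k ≤ n) :
    qHermiteCoeff (1 / q) n k =
      q ^ ((k : ℤ) * ((k : ℤ) + 3 - 2 * (n : ℤ))) * qHermiteCoeff q n k := by
  simp only [qHermiteCoeff]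
  exact qHermiteCoeff_inv' q hq0 hq1 n k hk
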